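/- Let G=(V,E) be a graph with n vertices and red edges R, and let Ĝ be the bipartite graph on vertex set V⁺ ∪ V⁻ (two copies of V) with edges {v⁺,v⁻} for each v ∈ V, and edges {u⁺,v⁻} and {u⁻,v⁺} for each {u,v} ∈ E, where the red edges R̂ are all edges except those of the form {v⁺,v⁻}. Then every perfect matching M of Ĝ with |M ∩ R̂| odd projects (by mapping {u^±,v^∓} to {u,v}) to an edge multiset that decomposes into cycles (allowing degenerate cycles of a doubled edge) with an odd total number of edges from E, and hence contains an odd cycle of G. -/

import Mathlib

open SimpleGraph

/-- The bipartite double cover `Ĝ` of a graph `G`: vertices are two copies of `V`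
(`Sum.inl v = v⁺`, `Sum.inr v = v⁻`), with edges `{v⁺, v⁻}` for each `v ∈ V` and
`{u⁺, v⁻}`, `{u⁻, v⁺}` for each edge `{u, v}` of `G`. -/
def doubleCover {V : Type*} (G : SimpleGraph V) : SimpleGraph (V ⊕ V) where
  Adj a b :=
    match a, b with
    | Sum.inl u, Sum.inr v => u = v ∨ G.Adj u v
    | Sum.inr u, Sum.inl v => u = v ∨ G.Adj u v
    | _, _ => False
  symm := by
    constructor
    rintro (u | u) (v | v) h
    · exact h.elim
    · exact h.imp Eq.symm (fun h' => G.adj_symm h')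
    · exact h.imp Eq.symm (fun h' => G.adj_symm h')
    · exact h.elim
  loopless := by constructor; rintro (u | u) h <;> exact h

lemma multiset_odd_sum_exists {s : Multiset ℕ} (h : Odd s.sum) : ∃ x ∈ s, Odd x := by
  by_contra hc
  push_neg at hc
  simp only [Nat.not_odd_iff_even] at hc
  have key : ∀ t : Multiset ℕ, (∀ x ∈ t, Even x) → Even t.sum := by
    intro t
    induction t using Multiset.induction with
    | empty => simp
    | cons a t ih =>
      intro ht
      rw [Multiset.sum_cons]
      exact (ht a (Multiset.mem_cons_self a t)).add
        (ih (fun x hx => ht x (Multiset.mem_cons_of_mem hx)))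
  exact (Nat.not_odd_iff_even.mpr (key s hc)) h

lemma orbitWalk {V : Type*} (G : SimpleGraph V) (g : Equiv.Perm V) (a : V)
    (hadj : ∀ i : ℕ, G.Adj ((g ^ i) a) ((g ^ (i + 1)) a)) (k : ℕ) :
    ∃ p : G.Walk a ((g ^ k) a),
      p.support = (List.range (k + 1)).map (fun i => (g ^ i) a) ∧
      p.edges = (List.range k).map (fun i => s((g ^ i) a, (g ^ (i + 1)) a)) := by
  induction k with
  | zero =>
    refine ⟨SimpleGraph.Walk.nil.copy rfl (by simp), ?_, ?_⟩ <;> simp [List.range_succ]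
  | succ k ih =>
    obtain ⟨p, hsup, hedg⟩ := ih
    refine ⟨p.concat (hadj k), ?_, ?_⟩
    · rw [SimpleGraph.Walk.support_concat, hsup, List.range_succ (n := k + 1)]
      simp
    · rw [SimpleGraph.Walk.edges_concat, hedg, List.range_succ (n := k)]
      simp

/-- Every perfect matching `M` of the bipartite double cover `Ĝ` using an odd number
of red edges (the red edges `R̂` being all edges except those of the form `{v⁺, v⁻}`)
projects back to `G` (via `{u^±, v^∓} ↦ {u, v}`) to an edge multiset containing an odd
cycle of `G`. -/
theorem stmt_2 {V : Type*} [Fintype V] [DecidableEq V] (G : SimpleGraph V)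
    (M : (doubleCover G).Subgraph) (hM : M.IsPerfectMatching)
    (hodd : Odd ((M.edgeSet ∩ {e | ∀ v : V, e ≠ s(Sum.inl v, Sum.inr v)}).ncard)) :
    ∃ (u : V) (p : G.Walk u u), p.IsCycle ∧ Odd p.length ∧
      ∀ e ∈ p.edges, ∀ x y : V, e = s(x, y) →
        (s(Sum.inl x, Sum.inr y) ∈ M.edgeSet ∨ s(Sum.inr x, Sum.inl y) ∈ M.edgeSet) := by
  classical
  -- the matching function
  have hex : ∀ v : V, ∃! w : V, M.Adj (Sum.inl v) (Sum.inr w) := by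
    intro v
    obtain ⟨w, hw, huniq⟩ := hM.1 (hM.2 (Sum.inl v))
    cases w with
    | inl u => exact (M.adj_sub hw).elim
    | inr u => exact ⟨u, hw, fun y hy => Sum.inr.inj (huniq _ hy)⟩
  set f : V → V := fun v => (hex v).choose with hfdef
  have hf : ∀ v : V, M.Adj (Sum.inl v) (Sum.inr (f v)) := fun v => (hex v).choose_spec.1
  have hfu : ∀ v w : V, M.Adj (Sum.inl v) (Sum.inr w) → w = f v :=
    fun v w h => (hex v).choose_spec.2 w h
  have finj : Function.Injective f := by
    intro u v huv
    obtain ⟨w, hw, huniq⟩ := hM.1 (hM.2 (Sum.inr (f u)))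
    have h1 : Sum.inl u = w := huniq _ (M.adj_symm (hf u))
    have h2 : Sum.inl v = w := huniq _ (M.adj_symm (huv ▸ hf v))
    exact Sum.inl.inj (h1.trans h2.symm)
  set σ : Equiv.Perm V := Equiv.ofBijective f (Finite.injective_iff_bijective.mp finj) with hσdef
  have hσf : ∀ v, σ v = f v := fun v => rfl
  -- description of the edge set
  have hmem : ∀ e, e ∈ M.edgeSet ↔ ∃ v, e = s(Sum.inl v, Sum.inr (f v)) := by
    intro e
    induction e using Sym2.ind with
    | _ x y =>
      constructor
      · intro h
        rw [SimpleGraph.Subgraph.mem_edgeSet] at h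
        match x, y with
        | Sum.inl u, Sum.inl w => exact (M.adj_sub h).elim
        | Sum.inr u, Sum.inr w => exact (M.adj_sub h).elim
        | Sum.inl u, Sum.inr w => exact ⟨u, by rw [hfu u w h]⟩
        | Sum.inr u, Sum.inl w =>
          exact ⟨w, by rw [hfu w u (M.adj_symm h), Sym2.eq_swap]⟩
      · rintro ⟨v, hv⟩
        rw [hv, SimpleGraph.Subgraph.mem_edgeSet]
        exact hf v
  -- the red edge count equals the support size of σ
  have hset : (M.edgeSet ∩ {e | ∀ v : V, e ≠ s(Sum.inl v, Sum.inr v)})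
      = (fun v => s(Sum.inl v, Sum.inr (f v))) '' {v | f v ≠ v} := by
    ext e
    simp only [Set.mem_inter_iff, Set.mem_setOf_eq, Set.mem_image]
    constructor
    · rintro ⟨he, hred⟩
      obtain ⟨v, rfl⟩ := (hmem e).mp he
      refine ⟨v, fun hfv => hred v (by rw [hfv]), rfl⟩
    · rintro ⟨v, hfv, rfl⟩
      refine ⟨(hmem _).mpr ⟨v, rfl⟩, fun u hu => ?_⟩
      rw [Sym2.eq_iff] at hu
      rcases hu with ⟨h1, h2⟩ | ⟨h1, h2⟩
      · exact hfv ((Sum.inr.inj h2).trans (Sum.inl.inj h1).symm)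
      · exact (Sum.inl_ne_inr h1).elim
  have hinj2 : Set.InjOn (fun v => s(Sum.inl v, Sum.inr (f v))) {v | f v ≠ v} := by
    intro u _ v _ huv
    simp only [Sym2.eq_iff] at huv
    rcases huv with ⟨h1, _⟩ | ⟨h1, _⟩
    · exact Sum.inl.inj h1
    · exact (Sum.inl_ne_inr h1).elim
  have hsupp : {v | f v ≠ v} = (σ.support : Set V) := by
    ext v
    simp [Equiv.Perm.mem_support, hσf]
  have hcard : Odd σ.support.card := by
    rwa [hset, Set.ncard_image_of_injOn hinj2, hsupp, Set.ncard_coe_finset] at hodd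
  -- find an odd cycle of σ
  have hsum : Odd σ.cycleType.sum := by rwa [Equiv.Perm.sum_cycleType]
  obtain ⟨m, hm, hmodd⟩ := multiset_odd_sum_exists hsum
  rw [Equiv.Perm.cycleType_def, Multiset.mem_map] at hm
  obtain ⟨c, hcmem, hcm⟩ := hm
  rw [← Finset.mem_def] at hcmem
  have hccyc : c.IsCycle := (Equiv.Perm.mem_cycleFactorsFinset_iff.mp hcmem).1
  have hmne : c.support.Nonempty := by
    rw [← Finset.card_pos, show c.support.card = m from hcm]
    exact hmodd.pos
  obtain ⟨a, ha⟩ := hmne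
  have hceq : c = σ.cycleOf a := Equiv.Perm.cycle_is_cycleOf ha hcmem
  set n : ℕ := (σ.cycleOf a).support.card with hndef
  have hnm : n = m := by rw [hndef, ← hceq]; exact hcm
  have hnodd : Odd n := hnm ▸ hmodd
  have haσ : a ∈ σ.support := Equiv.Perm.support_cycleOf_le σ a (hceq ▸ ha)
  have hσa : σ a ≠ a := Equiv.Perm.mem_support.mp haσ
  have hn2 : 2 ≤ n := Equiv.Perm.two_le_card_support_cycleOf_iff.mpr hσa
  have hn3 : 3 ≤ n := by obtain ⟨t, ht⟩ := hnodd; omega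
  -- key injectivity modulo n
  have key : ∀ i j : ℕ, (σ ^ i) a = (σ ^ j) a ↔ i % n = j % n := by
    intro i j
    constructor
    · intro h
      have h' : (σ ^ (i : ℤ)) a = (σ ^ (j : ℤ)) a := by
        rwa [zpow_natCast, zpow_natCast]
      have := (Equiv.Perm.zpow_eq_zpow_on_iff σ hσa).mp h'
      rw [← hndef] at this
      have h2 : ((i % n : ℕ) : ℤ) = ((j % n : ℕ) : ℤ) := by
        push_cast
        exact_mod_cast this
      exact_mod_cast h2
    · intro h
      rw [← Equiv.Perm.pow_mod_card_support_cycleOf_self_apply σ i a,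
        ← Equiv.Perm.pow_mod_card_support_cycleOf_self_apply σ j a, ← hndef, h]
  have keylt : ∀ i j : ℕ, i < n → j < n → (σ ^ i) a = (σ ^ j) a → i = j := by
    intro i j hi hj h
    have := (key i j).mp h
    rwa [Nat.mod_eq_of_lt hi, Nat.mod_eq_of_lt hj] at this
  have hsn : (σ ^ n) a = a := by
    have := (key n 0).mpr (by simp)
    simpa using this
  -- adjacency along the orbit
  have hpowsupp : ∀ i : ℕ, (σ ^ i) a ∈ σ.support :=
    fun i => Equiv.Perm.pow_apply_mem_support.mpr haσ
  have hstep : ∀ i : ℕ, (σ ^ (i + 1)) a = f ((σ ^ i) a) := by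
    intro i
    rw [pow_succ' σ i, Equiv.Perm.mul_apply, hσf]
  have hadj : ∀ i : ℕ, G.Adj ((σ ^ i) a) ((σ ^ (i + 1)) a) := by
    intro i
    set x := (σ ^ i) a
    have hne : f x ≠ x := by
      rw [← hσf]; exact Equiv.Perm.mem_support.mp (hpowsupp i)
    have := M.adj_sub (hf x)
    rw [hstep i]
    rcases this with h | h
    · exact absurd h.symm hne
    · exact h
  -- construct the cycle
  obtain ⟨p0, hsup, hedg⟩ := orbitWalk G σ a hadj n
  set p : G.Walk a a := p0.copy rfl hsn with hpdef
  have hpsup : p.support = (List.range (n + 1)).map (fun i => (σ ^ i) a) := by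
    rw [hpdef, SimpleGraph.Walk.support_copy]; exact hsup
  have hpedg : p.edges = (List.range n).map (fun i => s((σ ^ i) a, (σ ^ (i + 1)) a)) := by
    rw [hpdef, SimpleGraph.Walk.edges_copy]; exact hedg
  have hplen : p.length = n := by
    rw [← SimpleGraph.Walk.length_edges, hpedg, List.length_map, List.length_range]
  -- mod helper
  have modinj : ∀ i j : ℕ, i < n → j < n → (i + 1) % n = (j + 1) % n → i = j := by
    intro i j hi hj h
    rcases Nat.le_total i j with hle | hle
    · have h' : (i + 1) % n = (j + 1) % n := h
      have hd : n ∣ (j + 1) - (i + 1) := (Nat.modEq_iff_dvd' (by omega)).mp h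
      have : j - i < n := by omega
      have : j + 1 - (i + 1) = 0 := by
        rcases Nat.eq_zero_of_dvd_of_lt hd (by omega) with h0
        · exact h0
      omega
    · have hd : n ∣ (i + 1) - (j + 1) := (Nat.modEq_iff_dvd' (by omega)).mp h.symm
      have : i + 1 - (j + 1) = 0 := Nat.eq_zero_of_dvd_of_lt hd (by omega)
      omega
  refine ⟨a, p, ⟨⟨⟨?_⟩, ?_⟩, ?_⟩, ?_, ?_⟩
  -- edges nodup
  · rw [hpedg]
    refine List.Nodup.map_on ?_ List.nodup_range
    intro i hi j hj hij
    rw [List.mem_range] at hi hj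
    rw [Sym2.eq_iff] at hij
    rcases hij with ⟨h1, _⟩ | ⟨h1, h2⟩
    · exact keylt i j hi hj h1
    · exfalso
      have m1 : i ≡ j + 1 [MOD n] := (key i (j + 1)).mp h1
      have m2 : i + 1 ≡ j [MOD n] := (key (i + 1) j).mp h2
      have m3 : i + j ≡ (j + 1) + (i + 1) [MOD n] := m1.add m2.symm
      have hd : n ∣ ((j + 1) + (i + 1)) - (i + j) := (Nat.modEq_iff_dvd' (by omega)).mp m3
      have h2' : ((j + 1) + (i + 1)) - (i + j) = 2 := by omega
      rw [h2'] at hd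
      have := Nat.le_of_dvd (by omega) hd
      omega
  -- nonempty
  · intro hnil
    have := hplen
    rw [hnil] at this
    simp at this
    omega
  -- support tail nodup
  · rw [hpsup, List.range_succ_eq_map]
    simp only [List.map_cons, List.tail_cons, List.map_map]
    refine List.Nodup.map_on ?_ List.nodup_range
    intro i hi j hj hij
    rw [List.mem_range] at hi hj
    simp only [Function.comp_apply] at hij
    have := (key (i + 1) (j + 1)).mp hij
    exact modinj i j hi hj this
  -- odd length
  · rw [hplen]; exact hnodd
  -- edges project to matching
  · intro e he x y hxy
    rw [hpedg, List.mem_map] at he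
    obtain ⟨i, _, rfl⟩ := he
    rw [Sym2.eq_iff] at hxy
    rcases hxy with ⟨h1, h2⟩ | ⟨h1, h2⟩
    · left
      rw [SimpleGraph.Subgraph.mem_edgeSet, ← h1, ← h2, hstep i]
      exact hf _
    · right
      rw [SimpleGraph.Subgraph.mem_edgeSet, ← h1, ← h2, hstep i]
      exact M.adj_symm (hf _)
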